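/- Let G be a graph on n vertices and let u, v be two nonadjacent vertices of G with d_G(u) + d_G(v) ≥ 2k+1. If the graph G + uv obtained by adding the edge uv has a matching of size k+1, then G has a matching of size k+1. -/

import Mathlib

private lemma aux_uniq {V : Type*} {G : SimpleGraph V} {H : G.Subgraph}
    (hH : H.IsMatching) {c d d' : V} (h1 : H.Adj c d) (h2 : H.Adj c d') : d = d' := by
  obtain ⟨w, -, hw⟩ := hH (H.edge_vert h1)
  rw [hw d h1, hw d' h2]

/-- Delete a matched edge from a matching. -/
private lemma aux_delete {V : Type*} {G : SimpleGraph V} {H : G.Subgraph}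
    (hH : H.IsMatching) {x y : V} (hxy : H.Adj x y) :
    ∃ H' : G.Subgraph, H'.verts = H.verts \ {x, y} ∧ H'.IsMatching ∧
      H'.edgeSet = H.edgeSet \ {s(x, y)} ∧
      (∀ a b, H'.Adj a b ↔ H.Adj a b ∧ a ≠ x ∧ a ≠ y ∧ b ≠ x ∧ b ≠ y) := by
  refine ⟨{ verts := H.verts \ {x, y},
            Adj := fun a b => H.Adj a b ∧ a ≠ x ∧ a ≠ y ∧ b ≠ x ∧ b ≠ y,
            adj_sub := fun h => H.adj_sub h.1,
            edge_vert := fun h => ⟨H.edge_vert h.1, by simp [h.2.1, h.2.2.1]⟩,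
            symm := ⟨fun a b h => ⟨h.1.symm, h.2.2.2.1, h.2.2.2.2, h.2.1, h.2.2.1⟩⟩ },
        rfl, ?_, ?_, fun a b => Iff.rfl⟩
  · rintro a ⟨ha, hax⟩
    simp only [Set.mem_insert_iff, Set.mem_singleton_iff, not_or] at hax
    obtain ⟨b, hb, hbu⟩ := hH ha
    have hbx : b ≠ x := by
      rintro rfl
      exact hax.2 (aux_uniq hH hb.symm hxy)
    have hby : b ≠ y := by
      rintro rfl
      exact hax.1 (aux_uniq hH hb.symm hxy.symm)
    refine ⟨b, ⟨hb, hax.1, hax.2, hbx, hby⟩, fun c hc => hbu c hc.1⟩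
  · ext e
    refine e.ind (fun a b => ?_)
    simp only [SimpleGraph.Subgraph.mem_edgeSet, Set.mem_diff, Set.mem_singleton_iff]
    constructor
    · rintro ⟨h1, hax, hay, hbx, hby⟩
      refine ⟨h1, fun he => ?_⟩
      rw [Sym2.eq_iff] at he
      rcases he with ⟨rfl, rfl⟩ | ⟨rfl, rfl⟩ <;> simp_all
    · rintro ⟨h1, he⟩
      refine ⟨h1, ?_, ?_, ?_, ?_⟩
      · rintro rfl
        have hby := aux_uniq hH h1 hxy
        subst hby
        rw [Sym2.eq_iff] at he; tauto
      · rintro rfl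
        have hbx := aux_uniq hH h1 hxy.symm
        subst hbx
        rw [Sym2.eq_iff] at he; tauto
      · rintro rfl
        have hay := aux_uniq hH h1.symm hxy
        subst hay
        rw [Sym2.eq_iff] at he; tauto
      · rintro rfl
        have hax := aux_uniq hH h1.symm hxy.symm
        subst hax
        rw [Sym2.eq_iff] at he; tauto

/-- Transfer a subgraph of `G + uv` not using the edge `uv` to a subgraph of `G`. -/
private lemma aux_transfer {V : Type*} {G : SimpleGraph V} {u v : V}
    {H : (G ⊔ SimpleGraph.fromEdgeSet {s(u, v)}).Subgraph}
    (he : s(u, v) ∉ H.edgeSet) :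
    ∃ H₀ : G.Subgraph, H₀.verts = H.verts ∧ (H.IsMatching → H₀.IsMatching) ∧
      H₀.edgeSet = H.edgeSet ∧ (∀ a b, H₀.Adj a b ↔ H.Adj a b) := by
  refine ⟨{ verts := H.verts, Adj := H.Adj, adj_sub := ?_,
            edge_vert := fun h => H.edge_vert h, symm := H.symm },
          rfl, fun hm => hm, rfl, fun _ _ => Iff.rfl⟩
  intro a b h
  have h2 := H.adj_sub h
  simp only [SimpleGraph.sup_adj, SimpleGraph.fromEdgeSet_adj, Set.mem_singleton_iff] at h2
  rcases h2 with h2 | h2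
  · exact h2
  · have h3 : s(a, b) ∈ H.edgeSet := SimpleGraph.Subgraph.mem_edgeSet.2 h
    rw [h2.1] at h3
    exact absurd h3 he

/-- Extend a matching by a new edge on fresh vertices. -/
private lemma aux_extend {V : Type*} {G : SimpleGraph V} {H : G.Subgraph}
    (hH : H.IsMatching) {a b : V} (hab : G.Adj a b)
    (ha : a ∉ H.verts) (hb : b ∉ H.verts) :
    ∃ H' : G.Subgraph, H'.IsMatching ∧ H'.edgeSet = insert s(a, b) H.edgeSet ∧
      H'.verts = insert a (insert b H.verts) := by
  refine ⟨H ⊔ G.subgraphOfAdj hab, ?_, ?_, ?_⟩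
  · refine hH.sup (SimpleGraph.Subgraph.IsMatching.subgraphOfAdj hab) ?_
    rw [SimpleGraph.support_subgraphOfAdj]
    rw [Set.disjoint_right]
    intro x hx
    have hsub := H.support_subset_verts
    rcases hx with rfl | hx
    · exact fun hc => ha (hsub hc)
    · rw [Set.mem_singleton_iff] at hx
      subst hx
      exact fun hc => hb (hsub hc)
  · rw [SimpleGraph.Subgraph.edgeSet_sup, SimpleGraph.edgeSet_subgraphOfAdj]
    rw [Set.union_singleton]
  · rw [SimpleGraph.Subgraph.verts_sup]
    show H.verts ∪ {a, b} = _
    rw [Set.union_comm]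
    simp [Set.insert_union]

/-- A matching has at most twice as many vertices as edges. -/
private lemma aux_card {V : Type*} [Fintype V] [DecidableEq V] {G : SimpleGraph V}
    {H : G.Subgraph} (hH : H.IsMatching) :
    H.verts.ncard ≤ 2 * H.edgeSet.ncard := by
  classical
  set p : V → V := fun w => if h : w ∈ H.verts then (hH h).choose else w with hp
  have hp1 : ∀ w ∈ H.verts, H.Adj w (p w) := by
    intro w hw
    simp only [hp, dif_pos hw]
    exact (hH hw).choose_spec.1
  set f : V → Sym2 V := fun w => s(w, p w) with hf
  have hs := Set.toFinite H.verts
  have ht := Set.toFinite H.edgeSet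
  rw [Set.ncard_eq_toFinset_card _ hs, Set.ncard_eq_toFinset_card _ ht]
  refine Finset.card_le_mul_card_image_of_maps_to (f := f) ?_ 2 ?_
  · intro w hw
    rw [Set.Finite.mem_toFinset] at hw ⊢
    exact SimpleGraph.Subgraph.mem_edgeSet.2 (hp1 w hw)
  · intro e he
    show (hs.toFinset.filter fun x => f x = e).card ≤ 2
    rcases (hs.toFinset.filter fun x => f x = e).eq_empty_or_nonempty with hne | hne
    · rw [hne]; simp
    · obtain ⟨w, hw⟩ := hne
      rw [Finset.mem_filter] at hw
      have hsub : (hs.toFinset.filter fun x => f x = e) ⊆ {w, p w} := by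
        intro b hbmem
        rw [Finset.mem_filter] at hbmem
        have : f b = f w := by rw [hbmem.2, hw.2]
        simp only [hf, Sym2.eq_iff] at this
        rcases this with ⟨h1, _⟩ | ⟨h1, h2⟩
        · simp [h1]
        · simp [h1]
      calc (hs.toFinset.filter fun x => f x = e).card ≤ ({w, p w} : Finset V).card :=
            Finset.card_le_card hsub
        _ ≤ 2 := Finset.card_insert_le _ _ |>.trans (by simp)

theorem stmt_10 (n k : ℕ) (G : SimpleGraph (Fin n)) (u v : Fin n)
    (hne : u ≠ v) (hadj : ¬ G.Adj u v)
    (hdeg : 2 * k + 1 ≤ (G.neighborSet u).ncard + (G.neighborSet v).ncard)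
    (h : ∃ M : (G ⊔ SimpleGraph.fromEdgeSet {s(u, v)}).Subgraph,
        M.IsMatching ∧ M.edgeSet.ncard = k + 1) :
    ∃ M : G.Subgraph, M.IsMatching ∧ M.edgeSet.ncard = k + 1 := by
  classical
  obtain ⟨M, hM, hMcard⟩ := h
  by_cases he : s(u, v) ∈ M.edgeSet
  case neg =>
    obtain ⟨M₀, -, hmatch, hedge, -⟩ := aux_transfer he
    exact ⟨M₀, hmatch hM, by rw [hedge, hMcard]⟩
  case pos =>
    rw [SimpleGraph.Subgraph.mem_edgeSet] at he
    -- delete the edge uv from M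
    obtain ⟨M', hM'verts, hM'match, hM'edge, hM'adj⟩ := aux_delete hM he
    have huv' : s(u, v) ∉ M'.edgeSet := by
      rw [hM'edge]; simp
    obtain ⟨N, hNverts, hNmatch', hNedge, hNadj⟩ := aux_transfer huv'
    have hNm : N.IsMatching := hNmatch' hM'match
    have hNverts' : N.verts = M.verts \ {u, v} := by rw [hNverts, hM'verts]
    have hNedge' : N.edgeSet = M.edgeSet \ {s(u, v)} := by rw [hNedge, hM'edge]
    have hNcard : N.edgeSet.ncard = k := by
      rw [hNedge', Set.ncard_diff_singleton_of_mem (SimpleGraph.Subgraph.mem_edgeSet.2 he), hMcard]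
      omega
    have huN : u ∉ N.verts := by rw [hNverts']; simp
    have hvN : v ∉ N.verts := by rw [hNverts']; simp
    have hNsubM : N.verts ⊆ M.verts := by rw [hNverts']; exact Set.diff_subset
    by_cases hw : ∃ w, w ∉ M.verts ∧ (G.Adj u w ∨ G.Adj v w)
    · obtain ⟨w, hwM, hwadj⟩ := hw
      have hwN : w ∉ N.verts := fun hc => hwM (hNsubM hc)
      rcases hwadj with hw1 | hw1
      · obtain ⟨H', hm, hedge, -⟩ := aux_extend hNm hw1 huN hwN
        refine ⟨H', hm, ?_⟩
        rw [hedge, Set.ncard_insert_of_notMem (fun hc => huN (N.edge_vert (SimpleGraph.Subgraph.mem_edgeSet.1 hc))), hNcard]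
      · obtain ⟨H', hm, hedge, -⟩ := aux_extend hNm hw1 hvN hwN
        refine ⟨H', hm, ?_⟩
        rw [hedge, Set.ncard_insert_of_notMem (fun hc => hvN (N.edge_vert (SimpleGraph.Subgraph.mem_edgeSet.1 hc))), hNcard]
    · by_cases hb : ∃ x y, N.Adj x y ∧ G.Adj u x ∧ G.Adj v y
      · obtain ⟨x, y, hxy, hux, hvy⟩ := hb
        have hxN : x ∈ N.verts := N.edge_vert hxy
        have hyN : y ∈ N.verts := N.edge_vert hxy.symm
        have hxyne : x ≠ y := (N.adj_sub hxy).ne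
        have hk1 : 1 ≤ k := by
          rw [← hNcard]
          exact (Set.ncard_pos (Set.toFinite _)).2 ⟨_, SimpleGraph.Subgraph.mem_edgeSet.2 hxy⟩
        obtain ⟨N₂, hN₂verts, hN₂match, hN₂edge, -⟩ := aux_delete hNm hxy
        have hxN₂ : x ∉ N₂.verts := by rw [hN₂verts]; simp
        have hyN₂ : y ∉ N₂.verts := by rw [hN₂verts]; simp
        have huN₂ : u ∉ N₂.verts := by rw [hN₂verts]; exact fun hc => huN hc.1
        have hvN₂ : v ∉ N₂.verts := by rw [hN₂verts]; exact fun hc => hvN hc.1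
        have hN₂card : N₂.edgeSet.ncard = k - 1 := by
          rw [hN₂edge, Set.ncard_diff_singleton_of_mem (SimpleGraph.Subgraph.mem_edgeSet.2 hxy), hNcard]
        obtain ⟨P, hPm, hPedge, hPverts⟩ := aux_extend hN₂match hux huN₂ hxN₂
        have hvP : v ∉ P.verts := by
          rw [hPverts]
          simp only [Set.mem_insert_iff, not_or]
          exact ⟨hne.symm, fun hc => hvN (by rw [hc]; exact hxN), hvN₂⟩
        have hyP : y ∉ P.verts := by
          rw [hPverts]
          simp only [Set.mem_insert_iff, not_or]
          exact ⟨fun hc => huN (hc ▸ hyN), fun hc => hxyne hc.symm, hyN₂⟩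
        obtain ⟨Q, hQm, hQedge, -⟩ := aux_extend hPm hvy hvP hyP
        refine ⟨Q, hQm, ?_⟩
        have h1 : s(u, x) ∉ N₂.edgeSet :=
          fun hc => huN₂ (N₂.edge_vert (SimpleGraph.Subgraph.mem_edgeSet.1 hc))
        have h2 : s(v, y) ∉ P.edgeSet :=
          fun hc => hvP (P.edge_vert (SimpleGraph.Subgraph.mem_edgeSet.1 hc))
        rw [hQedge, Set.ncard_insert_of_notMem h2, hPedge,
          Set.ncard_insert_of_notMem h1, hN₂card]
        omega
      · -- counting contradiction
        exfalso
        push_neg at hw hb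
        set q : Fin n → Fin n := fun w => if h : w ∈ N.verts then (hNm h).choose else w with hq
        have hq1 : ∀ w ∈ N.verts, N.Adj w (q w) := by
          intro w hw
          simp only [hq, dif_pos hw]
          exact (hNm hw).choose_spec.1
        have hq2 : ∀ w x, N.Adj w x → q w = x := by
          intro w x hwx
          have hw : w ∈ N.verts := N.edge_vert hwx
          simp only [hq, dif_pos hw]
          exact ((hNm hw).choose_spec.2 x hwx).symm
        have hSu : G.neighborSet u ⊆ N.verts := by
          intro w hwu
          rw [SimpleGraph.mem_neighborSet] at hwu
          rw [hNverts']
          refine ⟨by by_contra hc; exact (hw w hc).1 hwu, ?_⟩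
          simp only [Set.mem_insert_iff, Set.mem_singleton_iff, not_or]
          exact ⟨hwu.ne', fun hc => hadj (hc ▸ hwu)⟩
        have hSv : G.neighborSet v ⊆ N.verts := by
          intro w hwv
          rw [SimpleGraph.mem_neighborSet] at hwv
          rw [hNverts']
          refine ⟨by by_contra hc; exact (hw w hc).2 hwv, ?_⟩
          simp only [Set.mem_insert_iff, Set.mem_singleton_iff, not_or]
          exact ⟨fun hc => hadj (hc ▸ hwv.symm), hwv.ne'⟩
        have hinj : Set.InjOn q (G.neighborSet v) := by
          intro w1 hw1 w2 hw2 hqeq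
          have h1 : N.Adj w1 (q w1) := hq1 w1 (hSv hw1)
          have h2 : N.Adj w2 (q w2) := hq1 w2 (hSv hw2)
          rw [hqeq] at h1
          have := hq2 (q w2) w1 h1.symm
          rw [hq2 (q w2) w2 h2.symm] at this
          exact this.symm
        have hqimg : q '' (G.neighborSet v) ⊆ N.verts := by
          rintro a ⟨w, hwv, rfl⟩
          exact N.edge_vert (hq1 w (hSv hwv)).symm
        have hdisj : Disjoint (G.neighborSet u) (q '' (G.neighborSet v)) := by
          rw [Set.disjoint_left]
          rintro a ha ⟨w, hwv, rfl⟩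
          exact hb (q w) w (hq1 w (hSv hwv)).symm ha hwv
        have hle : (G.neighborSet u).ncard + (G.neighborSet v).ncard ≤ N.verts.ncard := by
          rw [← Set.ncard_image_of_injOn hinj, ← Set.ncard_union_eq hdisj
            (Set.toFinite _) (Set.toFinite _)]
          exact Set.ncard_le_ncard (Set.union_subset hSu hqimg) (Set.toFinite _)
        have := aux_card hNm
        rw [hNcard] at this
        omega
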